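/- Let p1, p2, p3 ≥ 2 with a·xi ∈ S for some a > 0 (where S = { x ∈ L(p1,p2,p3) : 0 ≤ x ≤ n·w + c for all n ≥ 2 }). Then a ≤ pi − 2. -/

import Mathlib

/-- The subgroup of relations defining L(p₁,p₂,p₃): p₁·x₁ = p₂·x₂ = p₃·x₃. -/
def LRel (p₁ p₂ p₃ : ℕ) : AddSubgroup (ℤ × ℤ × ℤ) :=
  AddSubgroup.closure {((p₁ : ℤ), -(p₂ : ℤ), (0 : ℤ)), ((0 : ℤ), (p₂ : ℤ), -(p₃ : ℤ))}

lemma mem_LRel {p₁ p₂ p₃ : ℕ} (hp₁ : 0 < p₁) (hp₃ : 0 < p₃) (z : ℤ × ℤ × ℤ) :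
    z ∈ LRel p₁ p₂ p₃ ↔
      (p₁:ℤ) ∣ z.1 ∧ (p₂:ℤ) ∣ z.2.1 ∧ (p₃:ℤ) ∣ z.2.2 ∧
      z.1 * (p₂*p₃) + z.2.1 * (p₁*p₃) + z.2.2 * (p₁*p₂) = 0 := by
  constructor
  · intro hz
    induction hz using AddSubgroup.closure_induction with
    | mem g hg =>
      rcases hg with hg | hg <;> subst hg
      · exact ⟨⟨1, by ring⟩, ⟨-1, by ring⟩, ⟨0, by ring⟩, by push_cast; ring⟩
      · exact ⟨⟨0, by ring⟩, ⟨1, by ring⟩, ⟨-1, by ring⟩, by push_cast; ring⟩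
    | zero => simp
    | add x y hx hy ihx ihy =>
      obtain ⟨h1, h2, h3, h4⟩ := ihx
      obtain ⟨g1, g2, g3, g4⟩ := ihy
      exact ⟨dvd_add h1 g1, dvd_add h2 g2, dvd_add h3 g3, by
        simp only [Prod.fst_add, Prod.snd_add]; nlinarith [h4, g4]⟩
    | neg x hx ihx =>
      obtain ⟨h1, h2, h3, h4⟩ := ihx
      exact ⟨dvd_neg.2 h1, dvd_neg.2 h2, dvd_neg.2 h3, by
        simp only [Prod.fst_neg, Prod.snd_neg]; nlinarith [h4]⟩
  · rintro ⟨⟨m, hm⟩, -, ⟨k, hk⟩, hsum⟩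
    have hv : z.2.1 = -(p₂:ℤ) * (m + k) := by
      have h1 : (p₁:ℤ) ≠ 0 := by positivity
      have h3 : (p₃:ℤ) ≠ 0 := by positivity
      have : (p₁:ℤ) * p₃ * (z.2.1 + p₂ * (m + k)) = 0 := by
        rw [hm, hk] at hsum; ring_nf; ring_nf at hsum; linarith
      have := mul_eq_zero.1 this
      rcases this with h | h
      · exact absurd h (by positivity)
      · linarith
    have hz : z = m • ((p₁ : ℤ), -(p₂ : ℤ), (0 : ℤ)) + (-k) • ((0 : ℤ), (p₂ : ℤ), -(p₃ : ℤ)) := by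
      ext <;> simp [hm, hk, hv] <;> ring
    rw [hz]
    exact AddSubgroup.add_mem _
      (AddSubgroup.zsmul_mem _ (AddSubgroup.subset_closure (by simp)) m)
      (AddSubgroup.zsmul_mem _ (AddSubgroup.subset_closure (by simp)) (-k))

/-- The rank-one abelian group L(p₁,p₂,p₃) on generators x₁,x₂,x₃ with
p₁·x₁ = p₂·x₂ = p₃·x₃. -/
abbrev LGrp (p₁ p₂ p₃ : ℕ) := (ℤ × ℤ × ℤ) ⧸ LRel p₁ p₂ p₃

lemma mk_smul (p₁ p₂ p₃ : ℕ) (a : ℤ) (v : ℤ × ℤ × ℤ) :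
    a • (QuotientAddGroup.mk v : LGrp p₁ p₂ p₃) = QuotientAddGroup.mk (a • v) :=
  (map_zsmul (QuotientAddGroup.mk' (LRel p₁ p₂ p₃)) a v).symm

lemma key0 {p q r a b₁ b₂ b₃ : ℤ} (hp : 2 ≤ p) (hq : 2 ≤ q) (hr : 2 ≤ r)
    (hb₁ : 0 ≤ b₁) (hb₂ : 0 ≤ b₂) (hb₃ : 0 ≤ b₃)
    (h1 : p ∣ (3*p - 2 - a - b₁)) (h2 : q ∣ (-2 - b₂)) (h3 : r ∣ (-2 - b₃))
    (hsum : (3*p-2-a-b₁)*(q*r) + (-2-b₂)*(p*r) + (-2-b₃)*(p*q) = 0) : a ≤ p - 2 := by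
  obtain ⟨k₁, hk₁⟩ := h1
  obtain ⟨k₂, hk₂⟩ := h2
  obtain ⟨k₃, hk₃⟩ := h3
  have hk2 : k₂ ≤ -1 := by nlinarith
  have hk3 : k₃ ≤ -1 := by nlinarith
  have hzero : p*q*r*(k₁ + k₂ + k₃) = 0 := by
    rw [hk₁, hk₂, hk₃] at hsum; linarith [hsum]
  have hpqr : (0:ℤ) < p*q*r := by positivity
  have hks : k₁ + k₂ + k₃ = 0 := by
    rcases mul_eq_zero.1 hzero with h | h
    · exact absurd h (by positivity)
    · exact h
  have hk1 : 2 ≤ k₁ := by omega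
  nlinarith

lemma key1 {p q r a b₁ b₂ b₃ : ℤ} (hp : 2 ≤ p) (hq : 2 ≤ q) (hr : 2 ≤ r) (ha : 0 < a)
    (hb₁ : 0 ≤ b₁) (hb₂ : 0 ≤ b₂) (hb₃ : 0 ≤ b₃)
    (h1 : p ∣ (3*p - 2 - b₁)) (h2 : q ∣ (-2 - a - b₂)) (h3 : r ∣ (-2 - b₃))
    (hsum : (3*p-2-b₁)*(q*r) + (-2-a-b₂)*(p*r) + (-2-b₃)*(p*q) = 0) : a ≤ q - 2 := by
  obtain ⟨k₁, hk₁⟩ := h1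
  obtain ⟨k₂, hk₂⟩ := h2
  obtain ⟨k₃, hk₃⟩ := h3
  have hk2 : k₂ ≤ -1 := by nlinarith
  have hk3 : k₃ ≤ -1 := by nlinarith
  have hzero : p*q*r*(k₁ + k₂ + k₃) = 0 := by
    rw [hk₁, hk₂, hk₃] at hsum; linarith [hsum]
  have hks : k₁ + k₂ + k₃ = 0 := by
    rcases mul_eq_zero.1 hzero with h | h
    · exact absurd h (by positivity)
    · exact h
  by_contra hcon
  push_neg at hcon
  have ha' : q - 1 ≤ a := by omega
  have hk2' : k₂ ≤ -2 := by nlinarith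
  have hk1 : 3 ≤ k₁ := by omega
  nlinarith

def lx₁ (p₁ p₂ p₃ : ℕ) : LGrp p₁ p₂ p₃ := QuotientAddGroup.mk ((1 : ℤ), 0, 0)
def lx₂ (p₁ p₂ p₃ : ℕ) : LGrp p₁ p₂ p₃ := QuotientAddGroup.mk ((0 : ℤ), 1, 0)
def lx₃ (p₁ p₂ p₃ : ℕ) : LGrp p₁ p₂ p₃ := QuotientAddGroup.mk ((0 : ℤ), 0, 1)

/-- The canonical element c = p₁·x₁. -/
def lc (p₁ p₂ p₃ : ℕ) : LGrp p₁ p₂ p₃ := (p₁ : ℤ) • lx₁ p₁ p₂ p₃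

/-- The dualizing element ω = c - x₁ - x₂ - x₃. -/
def lw (p₁ p₂ p₃ : ℕ) : LGrp p₁ p₂ p₃ :=
  lc p₁ p₂ p₃ - lx₁ p₁ p₂ p₃ - lx₂ p₁ p₂ p₃ - lx₃ p₁ p₂ p₃

lemma lhs_eq (p₁ p₂ p₃ : ℕ) :
    ((2:ℕ) : ℤ) • lw p₁ p₂ p₃ + lc p₁ p₂ p₃
      = (QuotientAddGroup.mk (3*(p₁:ℤ)-2, -2, -2) : LGrp p₁ p₂ p₃) := by
  simp only [lw, lc, lx₁, lx₂, lx₃, mk_smul, ← QuotientAddGroup.mk_add,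
    ← QuotientAddGroup.mk_sub]
  congr 1
  simp [Prod.ext_iff, Prod.smul_mk, smul_eq_mul]
  ring_nf

/-- The partial order on L: u ≤ v iff v - u is a nonnegative integer combination
of x₁, x₂, x₃. -/
def lle (p₁ p₂ p₃ : ℕ) (u v : LGrp p₁ p₂ p₃) : Prop :=
  ∃ a b c : ℕ, v = u + (a : ℤ) • lx₁ p₁ p₂ p₃ + (b : ℤ) • lx₂ p₁ p₂ p₃ + (c : ℤ) • lx₃ p₁ p₂ p₃

/-- The set S = { x | 0 ≤ x ≤ n·ω + c for all n ≥ 2 }. -/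
def lS (p₁ p₂ p₃ : ℕ) : Set (LGrp p₁ p₂ p₃) :=
  {x | lle p₁ p₂ p₃ 0 x ∧ ∀ n : ℕ, 2 ≤ n → lle p₁ p₂ p₃ x ((n : ℤ) • lw p₁ p₂ p₃ + lc p₁ p₂ p₃)}

/-- If a·xᵢ ∈ S for some a > 0, then a ≤ pᵢ - 2. -/
theorem a_le_p_sub_two (p₁ p₂ p₃ : ℕ)
    (hp₁ : 2 ≤ p₁) (hp₂ : 2 ≤ p₂) (hp₃ : 2 ≤ p₃)
    (i : Fin 3) (a : ℤ) (ha : 0 < a)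
    (hmem : a • (![lx₁ p₁ p₂ p₃, lx₂ p₁ p₂ p₃, lx₃ p₁ p₂ p₃] i) ∈ lS p₁ p₂ p₃) :
    a ≤ ((![p₁, p₂, p₃] i : ℕ) : ℤ) - 2 := by
  obtain ⟨-, h2⟩ := hmem
  obtain ⟨b₁, b₂, b₃, heq⟩ := h2 2 le_rfl
  rw [lhs_eq] at heq
  have hq₁ : (0:ℤ) ≤ b₁ := Int.ofNat_nonneg b₁
  have hq₂ : (0:ℤ) ≤ b₂ := Int.ofNat_nonneg b₂
  have hq₃ : (0:ℤ) ≤ b₃ := Int.ofNat_nonneg b₃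
  have hP₁ : (2:ℤ) ≤ p₁ := by exact_mod_cast hp₁
  have hP₂ : (2:ℤ) ≤ p₂ := by exact_mod_cast hp₂
  have hP₃ : (2:ℤ) ≤ p₃ := by exact_mod_cast hp₃
  fin_cases i
  all_goals simp only [Matrix.cons_val_zero, Matrix.cons_val_one, Matrix.head_cons,
    Matrix.cons_val_two, Matrix.tail_cons, lx₁, lx₂, lx₃, mk_smul,
    ← QuotientAddGroup.mk_add] at heq ⊢
  · show a ≤ (p₁:ℤ) - 2
    have hd : (3*(p₁:ℤ)-2, (-2:ℤ), (-2:ℤ)) - (a • ((1:ℤ),(0:ℤ),(0:ℤ)) + (b₁:ℤ) • ((1:ℤ),(0:ℤ),(0:ℤ)) + (b₂:ℤ) • ((0:ℤ),(1:ℤ),(0:ℤ)) + (b₃:ℤ) • ((0:ℤ),(0:ℤ),(1:ℤ))) ∈ LRel p₁ p₂ p₃ := by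
      have h := QuotientAddGroup.eq.mp heq.symm
      rwa [neg_add_eq_sub] at h
    rw [mem_LRel (by omega) (by omega)] at hd
    obtain ⟨h1, h2, h3, h4⟩ := hd
    simp [Prod.ext_iff, smul_eq_mul] at h1 h2 h3 h4
    refine key0 (q := (p₂:ℤ)) (r := (p₃:ℤ)) hP₁ hP₂ hP₃ hq₁ hq₂ hq₃ ?_ ?_ ?_ ?_
    · rw [sub_sub]; exact h1
    · exact h2
    · exact h3
    · linear_combination h4
  · show a ≤ (p₂:ℤ) - 2
    have hd : (3*(p₁:ℤ)-2, (-2:ℤ), (-2:ℤ)) - (a • ((0:ℤ),(1:ℤ),(0:ℤ)) + (b₁:ℤ) • ((1:ℤ),(0:ℤ),(0:ℤ)) + (b₂:ℤ) • ((0:ℤ),(1:ℤ),(0:ℤ)) + (b₃:ℤ) • ((0:ℤ),(0:ℤ),(1:ℤ))) ∈ LRel p₁ p₂ p₃ := by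
      have h := QuotientAddGroup.eq.mp heq.symm
      rwa [neg_add_eq_sub] at h
    rw [mem_LRel (by omega) (by omega)] at hd
    obtain ⟨h1, h2, h3, h4⟩ := hd
    simp [Prod.ext_iff, smul_eq_mul] at h1 h2 h3 h4
    refine key1 (p := (p₁:ℤ)) (r := (p₃:ℤ)) hP₁ hP₂ hP₃ ha hq₁ hq₂ hq₃ ?_ ?_ ?_ ?_
    · exact h1
    · rw [sub_sub]; exact h2
    · exact h3
    · linear_combination h4
  · show a ≤ (p₃:ℤ) - 2
    have hd : (3*(p₁:ℤ)-2, (-2:ℤ), (-2:ℤ)) - (a • ((0:ℤ),(0:ℤ),(1:ℤ)) + (b₁:ℤ) • ((1:ℤ),(0:ℤ),(0:ℤ)) + (b₂:ℤ) • ((0:ℤ),(1:ℤ),(0:ℤ)) + (b₃:ℤ) • ((0:ℤ),(0:ℤ),(1:ℤ))) ∈ LRel p₁ p₂ p₃ := by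
      have h := QuotientAddGroup.eq.mp heq.symm
      rwa [neg_add_eq_sub] at h
    rw [mem_LRel (by omega) (by omega)] at hd
    obtain ⟨h1, h2, h3, h4⟩ := hd
    simp [Prod.ext_iff, smul_eq_mul] at h1 h2 h3 h4
    refine key1 (p := (p₁:ℤ)) (q := (p₃:ℤ)) (r := (p₂:ℤ)) (b₂ := (b₃:ℤ)) (b₃ := (b₂:ℤ)) hP₁ hP₃ hP₂ ha hq₁ hq₃ hq₂ ?_ ?_ ?_ ?_
    · exact h1
    · rw [sub_sub]; exact h3
    · exact h2
    · linear_combination h4
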